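/- Let M be a smooth manifold and let ω¹, ω², τ be smooth 1-forms on M satisfying the structure equations dω¹ = ω² ∧ τ, dω² = −ω¹ ∧ τ, and dτ = K·(ω¹ ∧ ω²) for a smooth function K. Let σ̄₁, σ̄₂, σ̄₃ be the 3×3 real matrices σ̄₁ = E₁₃+E₃₁, σ̄₂ = E₂₃+E₃₂, σ̄₃ = E₁₂−E₂₁ (where E_{ij} is the matrix unit), and let A = σ̄₁ω¹ + σ̄₂ω² + σ̄₃τ be the corresponding matrix-valued 1-form. Then the curvature Ω of A satisfies Ω(X,Y) = (K+1)·(ω¹∧ω²)(X,Y)·σ̄₃ for all vector fields X, Y. Consequently, if at every point p of M there exist vector fields X, Y with (ω¹∧ω²)(X,Y)(p) ≠ 0, then Ω vanishes identically if and only if K ≡ −1. -/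

import Mathlib

/-!
Statement 7 (Shchepetilov, "The geometric sense of R. Sasaki connection").

We model the smooth functions on `M` as the (pointwise) ring `M → ℝ`, and the
vector fields as a module `V` over `M → ℝ` with a Lie bracket and an action
`D : V → (M → ℝ) → (M → ℝ)` by derivations.  A 1-form assigns to each vector
field a function, `C^∞(M)`-linearly; its exterior derivative is
`dω(X,Y) = X(ω(Y)) − Y(ω(X)) − ω([X,Y])` and
`(ω ∧ η)(X,Y) = ω(X)η(Y) − ω(Y)η(X)`.

Given 1-forms `ω¹, ω², τ` with `dω¹ = ω² ∧ τ`, `dω² = −ω¹ ∧ τ`,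
`dτ = K·(ω¹ ∧ ω²)`, and the `so(2,1)` matrices
`σ̄₁ = E₁₃+E₃₁`, `σ̄₂ = E₂₃+E₃₂`, `σ̄₃ = E₁₂−E₂₁`, set
`A = σ̄₁ω¹ + σ̄₂ω² + σ̄₃τ`.  The curvature of `A` is
`Ω(X,Y) = X(A(Y)) − Y(A(X)) − A([X,Y]) + [A(X),A(Y)]` (applied entrywise).

The claim: `Ω(X,Y) = (K+1)·(ω¹∧ω²)(X,Y)·σ̄₃`; consequently, if at every
point `p` there are vector fields `X, Y` with `(ω¹∧ω²)(X,Y)(p) ≠ 0`, then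
`Ω ≡ 0` iff `K ≡ −1`.
-/
theorem sasaki_so21_form_curvature
    (M : Type*)
    (V : Type*) [AddCommGroup V] [Module (M → ℝ) V]
    (bracket : V → V → V)
    (D : V → (M → ℝ) → (M → ℝ))
    -- vector fields act on functions as derivations
    (hD_add : ∀ X a b, D X (a + b) = D X a + D X b)
    (hD_mul : ∀ X a b, D X (a * b) = D X a * b + a * D X b)
    -- the 1-forms ω¹, ω², τ and the function K
    (ω1 ω2 τ : V → M → ℝ) (K : M → ℝ)
    -- the 1-forms are C^∞(M)-linear in the vector field
    (hω1_add : ∀ X Y, ω1 (X + Y) = ω1 X + ω1 Y)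
    (hω1_smul : ∀ (u : M → ℝ) X, ω1 (u • X) = u * ω1 X)
    (hω2_add : ∀ X Y, ω2 (X + Y) = ω2 X + ω2 Y)
    (hω2_smul : ∀ (u : M → ℝ) X, ω2 (u • X) = u * ω2 X)
    (hτ_add : ∀ X Y, τ (X + Y) = τ X + τ Y)
    (hτ_smul : ∀ (u : M → ℝ) X, τ (u • X) = u * τ X)
    -- the structure equations dω¹ = ω² ∧ τ, dω² = −ω¹ ∧ τ, dτ = K·(ω¹ ∧ ω²)
    (hstr1 : ∀ X Y, D X (ω1 Y) - D Y (ω1 X) - ω1 (bracket X Y)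
      = ω2 X * τ Y - ω2 Y * τ X)
    (hstr2 : ∀ X Y, D X (ω2 Y) - D Y (ω2 X) - ω2 (bracket X Y)
      = -(ω1 X * τ Y - ω1 Y * τ X))
    (hstr3 : ∀ X Y, D X (τ Y) - D Y (τ X) - τ (bracket X Y)
      = K * (ω1 X * ω2 Y - ω1 Y * ω2 X)) :
    -- the matrices σ̄₁ = E₁₃+E₃₁, σ̄₂ = E₂₃+E₃₂, σ̄₃ = E₁₂−E₂₁
    let s1 : Matrix (Fin 3) (Fin 3) (M → ℝ) := !![0,0,1; 0,0,0; 1,0,0]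
    let s2 : Matrix (Fin 3) (Fin 3) (M → ℝ) := !![0,0,0; 0,0,1; 0,1,0]
    let s3 : Matrix (Fin 3) (Fin 3) (M → ℝ) := !![0,1,0; -1,0,0; 0,0,0]
    -- the matrix-valued 1-form A = σ̄₁ω¹ + σ̄₂ω² + σ̄₃τ
    let A : V → Matrix (Fin 3) (Fin 3) (M → ℝ) :=
      fun X => ω1 X • s1 + ω2 X • s2 + τ X • s3
    -- its curvature Ω(X,Y) = X(A(Y)) − Y(A(X)) − A([X,Y]) + [A(X),A(Y)]
    let Ω : V → V → Matrix (Fin 3) (Fin 3) (M → ℝ) :=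
      fun X Y => (A Y).map (D X) - (A X).map (D Y) - A (bracket X Y)
        + (A X * A Y - A Y * A X)
    -- the curvature identity Ω(X,Y) = (K+1)·(ω¹∧ω²)(X,Y)·σ̄₃ ...
    (∀ X Y, Ω X Y = ((K + 1) * (ω1 X * ω2 Y - ω1 Y * ω2 X)) • s3)
    -- ... and the consequence: if ω¹∧ω² is nowhere zero,
    -- then Ω ≡ 0 iff K ≡ −1
    ∧ ((∀ p : M, ∃ X Y, (ω1 X * ω2 Y - ω1 Y * ω2 X) p ≠ 0) →
        ((∀ X Y, Ω X Y = 0) ↔ ∀ p : M, K p = -1)) := by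
  intro s1 s2 s3 A Ω
  have hD0 : ∀ X, D X (0 : M → ℝ) = 0 := by
    intro X
    have h := hD_add X 0 0
    rw [add_zero] at h
    exact left_eq_add.mp h
  have hDneg : ∀ X (a : M → ℝ), D X (-a) = -D X a := by
    intro X a
    have h := hD_add X a (-a)
    rw [add_neg_cancel, hD0] at h
    exact (neg_eq_of_add_eq_zero_right h.symm).symm
  have hmain : ∀ X Y, Ω X Y = ((K + 1) * (ω1 X * ω2 Y - ω1 Y * ω2 X)) • s3 := by
    intro X Y
    show (A Y).map (D X) - (A X).map (D Y) - A (bracket X Y)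
        + (A X * A Y - A Y * A X) = _
    refine Matrix.ext fun i j => ?_
    fin_cases i <;> fin_cases j <;>
      simp only [A, s1, s2, s3, Fin.mk_zero, Fin.mk_one, Fin.reduceFinMk,
        Matrix.add_apply, Matrix.sub_apply,
        Matrix.map_apply, Matrix.smul_apply, Matrix.mul_apply,
        Fin.sum_univ_three, Matrix.cons_val', Matrix.cons_val_zero,
        Matrix.cons_val_one, Matrix.head_cons, Matrix.cons_val_two,
        Matrix.tail_cons, Matrix.empty_val', Matrix.cons_val_fin_one, Matrix.head_fin_const,
        Matrix.of_apply, Matrix.zero_apply, smul_eq_mul, mul_zero, mul_one,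
        mul_neg_one, add_zero, zero_add, zero_mul, mul_neg, neg_zero,
        zero_sub, sub_zero, neg_neg, hD0, hDneg] <;>
      [skip; linear_combination hstr3 X Y; linear_combination hstr1 X Y;
       linear_combination -hstr3 X Y; skip; linear_combination hstr2 X Y;
       linear_combination hstr1 X Y; linear_combination hstr2 X Y; skip] <;>
      ring
  refine ⟨hmain, fun hnz => ⟨fun h0 p => ?_, fun hK X Y => ?_⟩⟩
  · obtain ⟨X, Y, hp⟩ := hnz p
    have h := (h0 X Y) ▸ hmain X Y
    have h2 : (((K + 1) * (ω1 X * ω2 Y - ω1 Y * ω2 X)) • s3) 0 1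
        = (0 : Matrix (Fin 3) (Fin 3) (M → ℝ)) 0 1 := by rw [← h]
    simp [s3, smul_eq_mul] at h2
    have h3 := congrFun h2 p
    simp at h3
    rcases h3 with h3 | h3
    · linarith
    · exact absurd h3 hp
  · rw [hmain]
    have hK1 : (K + 1 : M → ℝ) = 0 := funext fun p => by
      simp [hK p]
    rw [hK1, zero_mul, zero_smul]
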